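/- Let p = 2^m − δ be prime, μ < m a positive integer with δ < 2^μ − 1, and k a positive integer with 2^k ≤ p. Let X and X′ be distinct binary strings of lengths L ≥ L′ ≥ 0 (both < 2^{m−1}), α ∈ Z_{2^μ}, and ℓ = ⌈L/n⌉. If τ is chosen uniformly from k-bit strings, then Pr[c-decBRWHash_τ(X) − c-decBRWHash_τ(X′) = α] ≤ (2ℓ+1)·2^{m−k−μ+1} when c = 1, and Pr[c-decBRWHash_τ(X) − c-decBRWHash_τ(X′) = α] < (2ℓ+2c+1)·2^{m−k−μ+1} when c > 1. -/

import Mathlib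

/-- The (big-endian) numerical value of a bit string. -/
def blockVal (b : List Bool) : ℕ :=
  b.foldl (fun acc bit => 2 * acc + bit.toNat) 0

/-- The polynomial `Q(x; M_1,…,M_ℓ, bin_{m−1}(L))` of the `c-decBRWHash` construction. -/
noncomputable def decQ (p n c : ℕ) (BRW : List (ZMod p) → Polynomial (ZMod p)) (X : List Bool) :
    Polynomial (ZMod p) :=
  let L := X.length
  let ℓ := (L + n - 1) / n
  let nn := (ℓ + c - 1) / c
  let d := if L = 0 then 1 else 2 ^ (Nat.log 2 nn + 1)
  let Qsum := ∑ j ∈ Finset.range c, Polynomial.X ^ ((c - 1 - j) * d) *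
      BRW ((List.range nn).map fun i =>
        ((blockVal ((X.drop (n * (c * i + j))).take n) : ℕ) : ZMod p))
  Polynomial.X * (Polynomial.X * Qsum + Polynomial.C (L : ZMod p))

/-- `c-decBRWHash_τ(X) = ((Q(τ) mod p) mod 2^μ) ∈ Z_{2^μ}`. -/
noncomputable def decBRWHash (p μ n c : ℕ) (BRW : List (ZMod p) → Polynomial (ZMod p))
    (τ : ZMod p) (X : List Bool) : ZMod (2 ^ μ) :=
  (((decQ p n c BRW X).eval τ).val : ZMod (2 ^ μ))


open Polynomial

lemma blockVal_foldl (l : List Bool) (a : ℕ) :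
    l.foldl (fun acc bit => 2 * acc + bit.toNat) a = a * 2 ^ l.length + blockVal l := by
  induction l generalizing a with
  | nil => simp [blockVal]
  | cons x t ih =>
    simp only [List.foldl_cons, List.length_cons, blockVal]
    rw [ih, ih (2 * 0 + x.toNat)]
    ring

lemma blockVal_cons (x : Bool) (t : List Bool) :
    blockVal (x :: t) = x.toNat * 2 ^ t.length + blockVal t := by
  have := blockVal_foldl t x.toNat
  simp [blockVal, this]

lemma blockVal_lt (l : List Bool) : blockVal l < 2 ^ l.length := by
  induction l with
  | nil => simp [blockVal]
  | cons x t ih =>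
    rw [blockVal_cons]
    have : x.toNat ≤ 1 := Bool.toNat_le x
    simp only [List.length_cons, pow_succ]
    nlinarith

lemma blockVal_inj (l1 l2 : List Bool) (h : l1.length = l2.length)
    (hv : blockVal l1 = blockVal l2) : l1 = l2 := by
  induction l1 generalizing l2 with
  | nil => cases l2 <;> simp_all
  | cons x t ih =>
    cases l2 with
    | nil => simp at h
    | cons y s =>
      simp only [List.length_cons, add_left_inj] at h
      rw [blockVal_cons, blockVal_cons, h] at hv
      have h1 := blockVal_lt t
      have h2 := blockVal_lt s
      rw [h] at h1
      have hxy : x = y := by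
        cases x <;> cases y <;> simp only [Bool.toNat_true, Bool.toNat_false] at hv <;>
          first | rfl | omega
      rw [hxy] at hv
      have hb : blockVal t = blockVal s := by omega
      rw [hxy, ih s h hb]


/-- uniqueness of the split `A·X^D + R` with `deg R < D`. -/
lemma split_unique {F : Type*} [Field F] {A A' R R' : Polynomial F} {D : ℕ}
    (hR : R.natDegree < D) (hR' : R'.natDegree < D)
    (h : A * X ^ D + R = A' * X ^ D + R') : A = A' ∧ R = R' := by
  have key : (A - A') * X ^ D = R' - R := by linear_combination h
  by_cases hAA : A = A'
  · refine ⟨hAA, ?_⟩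
    rw [hAA] at h
    exact add_left_cancel h
  · exfalso
    have hne : A - A' ≠ 0 := sub_ne_zero.mpr hAA
    have hX : (X : Polynomial F) ^ D ≠ 0 := pow_ne_zero _ X_ne_zero
    have hdeg : ((A - A') * X ^ D).natDegree = (A - A').natDegree + D := by
      rw [natDegree_mul hne hX, natDegree_X_pow]
    have h1 : D ≤ ((A - A') * X ^ D).natDegree := by omega
    have h2 : (R' - R).natDegree < D :=
      lt_of_le_of_lt (natDegree_sub_le _ _) (by omega)
    rw [key] at h1
    omega

lemma window_zero {F : Type*} [Semiring F] (c d : ℕ) (hd : 0 < d) (P : ℕ → Polynomial F)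
    (hdeg : ∀ j, (P j).natDegree < d)
    (h : ∑ j ∈ Finset.range c, Polynomial.X ^ ((c - 1 - j) * d) * P j = 0) :
    ∀ j < c, P j = 0 := by
  intro j hj
  ext i
  rcases lt_or_ge i d with hi | hi
  · have hcoeff := congrArg (fun q => Polynomial.coeff q ((c - 1 - j) * d + i)) h
    simp only [Polynomial.finset_sum_coeff, Polynomial.coeff_zero] at hcoeff
    rw [Finset.sum_eq_single j] at hcoeff
    · rw [add_comm ((c-1-j)*d) i, Polynomial.coeff_X_pow_mul] at hcoeff
      simpa using hcoeff
    · intro j' hj' hne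
      rw [Finset.mem_range] at hj'
      rw [X_pow_mul, Polynomial.coeff_mul_X_pow']
      split_ifs with hle
      · apply Polynomial.coeff_eq_zero_of_natDegree_lt
        have hlt : c - 1 - j' < c - 1 - j ∨ c - 1 - j < c - 1 - j' := by omega
        rcases hlt with hlt | hlt
        · -- (c-1-j')*d ≤ (c-1-j)*d - d, so index ≥ d + i
          have : (c - 1 - j') * d + d ≤ (c - 1 - j) * d := by
            calc (c - 1 - j') * d + d = (c - 1 - j' + 1) * d := by ring
            _ ≤ (c - 1 - j) * d := Nat.mul_le_mul_right d (by omega)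
          have : d ≤ (c - 1 - j) * d + i - (c - 1 - j') * d := by omega
          exact lt_of_lt_of_le (hdeg j') this
        · exfalso
          have : (c - 1 - j) * d + d ≤ (c - 1 - j') * d := by
            calc (c - 1 - j) * d + d = (c - 1 - j + 1) * d := by ring
            _ ≤ (c - 1 - j') * d := Nat.mul_le_mul_right d (by omega)
          omega
      · rfl
    · exact fun hjj => absurd (Finset.mem_range.mpr hj) hjj
  · exact Polynomial.coeff_eq_zero_of_natDegree_lt (lt_of_lt_of_le (hdeg j) hi)


section BRW
variable {p : ℕ} [NeZero p]
variable (BRW : List (ZMod p) → Polynomial (ZMod p))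
variable (hB0 : BRW [] = 0)
variable (hB1 : ∀ a : ZMod p, BRW [a] = Polynomial.C a)
variable (hB2 : ∀ a b : ZMod p, BRW [a, b] = Polynomial.C a * Polynomial.X + Polynomial.C b)
variable (hB3 : ∀ a b c' : ZMod p, BRW [a, b, c'] =
      (Polynomial.X + Polynomial.C a) * (Polynomial.X ^ 2 + Polynomial.C b) + Polynomial.C c')
variable (hBrec : ∀ l : List (ZMod p), 4 ≤ l.length →
      BRW l = BRW (l.take (2 ^ Nat.log 2 l.length - 1)) *
        (Polynomial.X ^ (2 ^ Nat.log 2 l.length) +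
          Polynomial.C (l.getD (2 ^ Nat.log 2 l.length - 1) 0)) +
        BRW (l.drop (2 ^ Nat.log 2 l.length)))

lemma natDegree_X_pow_le' (e : ℕ) : ((X : Polynomial (ZMod p)) ^ e).natDegree ≤ e :=
  le_trans (natDegree_pow_le) (by
    have := natDegree_X_le (R := ZMod p)
    calc e * (X : Polynomial (ZMod p)).natDegree ≤ e * 1 := Nat.mul_le_mul_left e this
    _ = e := by ring)

include hB0 hB1 hB2 in
lemma brw_deg_small : ∀ l : List (ZMod p), l.length ≤ 2 → (BRW l).natDegree ≤ 1 := by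
  intro l hl
  match l, hl with
  | [], _ => simp [hB0]
  | [a], _ => simp [hB1]
  | [a, b], _ =>
    rw [hB2]
    have h1 : (C a * X : Polynomial (ZMod p)).natDegree ≤ 1 :=
      le_trans natDegree_mul_le (by simp [natDegree_X_le, natDegree_C])
    exact le_trans (natDegree_add_le _ _) (max_le h1 (by simp))

lemma log23 : Nat.log 2 3 = 1 := Nat.log_eq_of_pow_le_of_lt_pow (by norm_num) (by norm_num)

include hB0 hB1 hB2 hB3 hBrec in
lemma brw_deg_le : ∀ l : List (ZMod p),
    (BRW l).natDegree ≤ 2 ^ (Nat.log 2 l.length + 1) - 1 := by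
  suffices H : ∀ s (l : List (ZMod p)), l.length = s →
      (BRW l).natDegree ≤ 2 ^ (Nat.log 2 l.length + 1) - 1 by
    exact fun l => H l.length l rfl
  intro s
  induction s using Nat.strong_induction_on with
  | _ s ih =>
  intro l hls
  subst hls
  rcases le_or_gt l.length 2 with h2 | h2
  · calc (BRW l).natDegree ≤ 1 := brw_deg_small BRW hB0 hB1 hB2 l h2
    _ ≤ _ := by
      have : 2 ≤ 2 ^ (Nat.log 2 l.length + 1) := by
        calc 2 = 2^1 := rfl
        _ ≤ _ := Nat.pow_le_pow_right (by norm_num) (by omega)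
      omega
  rcases eq_or_lt_of_le (show 3 ≤ l.length by omega) with h3 | h4
  · match l, h3.symm with
    | [a, b, c'], _ =>
      rw [hB3]
      have hlen : ([a, b, c'] : List (ZMod p)).length = 3 := rfl
      rw [hlen, log23]
      norm_num [natDegree_C]
      have e1 : (X + C a : Polynomial (ZMod p)).natDegree ≤ 1 :=
        le_trans (natDegree_add_le _ _) (by simp [natDegree_X_le, natDegree_C])
      have e2 : (X ^ 2 + C b : Polynomial (ZMod p)).natDegree ≤ 2 :=
        le_trans (natDegree_add_le _ _) (by simp [natDegree_X_pow_le', natDegree_C])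
      exact le_trans natDegree_mul_le (by omega)
  · -- length ≥ 4
    have h4' : 4 ≤ l.length := h4
    rw [hBrec l h4']
    set t := Nat.log 2 l.length with ht
    have ht2 : 2 ≤ t := Nat.le_log_of_pow_le (by norm_num) (by norm_num; omega)
    have hpow_le : 2 ^ t ≤ l.length := Nat.pow_log_le_self 2 (by omega)
    have hlt_pow : l.length < 2 ^ (t + 1) := Nat.lt_pow_succ_log_self (by norm_num) _
    have htake_len : (l.take (2 ^ t - 1)).length = 2 ^ t - 1 := by
      rw [List.length_take]; omega
    have hdrop_len : (l.drop (2 ^ t)).length = l.length - 2 ^ t := by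
      rw [List.length_drop]
    have hlog_take : Nat.log 2 (2 ^ t - 1) = t - 1 := by
      apply Nat.log_eq_of_pow_le_of_lt_pow
      · have : 2 ^ (t-1) * 2 ≤ 2 ^ t := by
          rw [← pow_succ]
          exact Nat.pow_le_pow_right (by norm_num) (by omega)
        have h1 : 1 ≤ 2 ^ (t-1) := Nat.one_le_two_pow
        omega
      · have : t - 1 + 1 = t := by omega
        rw [this]; omega
    have ihtake := ih (2 ^ t - 1) (by omega) (l.take (2 ^ t - 1)) htake_len
    rw [htake_len, hlog_take] at ihtake
    have e1 : t - 1 + 1 = t := by omega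
    rw [e1] at ihtake
    have ihdrop := ih (l.length - 2 ^ t) (by omega) (l.drop (2 ^ t)) hdrop_len
    rw [hdrop_len] at ihdrop
    have hdroplog : Nat.log 2 (l.length - 2 ^ t) + 1 ≤ t := by
      rcases Nat.eq_zero_or_pos (l.length - 2 ^ t) with h0 | h0
      · rw [h0, Nat.log_zero_right]; omega
      · have hlt : l.length - 2 ^ t < 2 ^ t := by omega
        have := Nat.log_lt_of_lt_pow (by omega) hlt
        omega
    have ihdrop' : (BRW (l.drop (2 ^ t))).natDegree ≤ 2 ^ t - 1 := by
      refine le_trans ihdrop ?_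
      have := Nat.pow_le_pow_right (show 1 ≤ 2 by norm_num) hdroplog
      omega
    refine le_trans (natDegree_add_le _ _) ?_
    rw [max_le_iff]
    have h1 : 1 ≤ 2 ^ t := Nat.one_le_two_pow
    have h2' : 2 ^ t + 2 ^ t = 2 ^ (t+1) := by rw [pow_succ]; ring
    constructor
    · refine le_trans (natDegree_mul_le) ?_
      have e2 : (X ^ (2^t) + C (l.getD (2^t - 1) 0) : Polynomial (ZMod p)).natDegree ≤ 2 ^ t :=
        le_trans (natDegree_add_le _ _) (by simp [natDegree_X_pow_le', natDegree_C])
      omega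
    · omega

section Nontriv
variable [Fact (1 < p)]

include hB3 hBrec hB0 hB1 hB2 in
lemma brw_monic : ∀ l : List (ZMod p), 3 ≤ l.length →
    (BRW l).Monic ∧ (BRW l).natDegree = 2 ^ (Nat.log 2 l.length + 1) - 1 := by
  suffices H : ∀ s (l : List (ZMod p)), l.length = s → 3 ≤ l.length →
      (BRW l).Monic ∧ (BRW l).natDegree = 2 ^ (Nat.log 2 l.length + 1) - 1 by
    exact fun l h => H l.length l rfl h
  intro s
  induction s using Nat.strong_induction_on with
  | _ s ih =>
  intro l hls h3
  subst hls
  rcases eq_or_lt_of_le h3 with h3' | h4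
  · match l, h3'.symm with
    | [a, b, c'], _ =>
      rw [hB3]
      have hlen : ([a, b, c'] : List (ZMod p)).length = 3 := rfl
      rw [hlen, log23]
      have hm1 : (X + C a : Polynomial (ZMod p)).Monic := monic_X_add_C a
      have hm2 : (X ^ 2 + C b : Polynomial (ZMod p)).Monic :=
        monic_X_pow_add_C b (by norm_num)
      have hmul : ((X + C a) * (X ^ 2 + C b) : Polynomial (ZMod p)).Monic := hm1.mul hm2
      have hdeg : ((X + C a) * (X ^ 2 + C b) : Polynomial (ZMod p)).natDegree = 3 := by
        rw [hm1.natDegree_mul hm2, natDegree_X_add_C, natDegree_X_pow_add_C]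
      have hlt : (C c' : Polynomial (ZMod p)).degree <
          ((X + C a) * (X ^ 2 + C b) : Polynomial (ZMod p)).degree := by
        refine lt_of_le_of_lt degree_C_le ?_
        rw [degree_eq_natDegree hmul.ne_zero, hdeg]
        norm_num
      refine ⟨hmul.add_of_left hlt, ?_⟩
      rw [natDegree_eq_of_degree_eq (degree_add_eq_left_of_degree_lt hlt), hdeg]
      norm_num
  · have h4' : 4 ≤ l.length := h4
    rw [hBrec l h4']
    set t := Nat.log 2 l.length with ht
    have ht2 : 2 ≤ t := Nat.le_log_of_pow_le (by norm_num) (by norm_num; omega)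
    have hpow_le : 2 ^ t ≤ l.length := Nat.pow_log_le_self 2 (by omega)
    have hlt_pow : l.length < 2 ^ (t + 1) := Nat.lt_pow_succ_log_self (by norm_num) _
    have h1t : 4 ≤ 2 ^ t := by calc 4 = 2^2 := rfl
                                  _ ≤ 2^t := Nat.pow_le_pow_right (by norm_num) ht2
    have htake_len : (l.take (2 ^ t - 1)).length = 2 ^ t - 1 := by
      rw [List.length_take]; omega
    have hdrop_len : (l.drop (2 ^ t)).length = l.length - 2 ^ t := by
      rw [List.length_drop]
    have hlog_take : Nat.log 2 (2 ^ t - 1) = t - 1 := by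
      apply Nat.log_eq_of_pow_le_of_lt_pow
      · have : 2 ^ (t-1) * 2 ≤ 2 ^ t := by
          rw [← pow_succ]; exact Nat.pow_le_pow_right (by norm_num) (by omega)
        have h1 : 1 ≤ 2 ^ (t-1) := Nat.one_le_two_pow
        omega
      · have : t - 1 + 1 = t := by omega
        rw [this]; omega
    obtain ⟨hAmon, hAdeg⟩ := ih (2 ^ t - 1) (by omega) (l.take (2 ^ t - 1)) htake_len
      (by omega)
    rw [htake_len, hlog_take] at hAdeg
    have e1 : t - 1 + 1 = t := by omega
    rw [e1] at hAdeg
    -- B degree bound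
    have ihdrop := brw_deg_le BRW hB0 hB1 hB2 hB3 hBrec (l.drop (2 ^ t))
    rw [hdrop_len] at ihdrop
    have hdroplog : Nat.log 2 (l.length - 2 ^ t) + 1 ≤ t := by
      rcases Nat.eq_zero_or_pos (l.length - 2 ^ t) with h0 | h0
      · rw [h0, Nat.log_zero_right]; omega
      · have hlt : l.length - 2 ^ t < 2 ^ t := by omega
        have := Nat.log_lt_of_lt_pow (by omega) hlt
        omega
    have ihdrop' : (BRW (l.drop (2 ^ t))).natDegree ≤ 2 ^ t - 1 := by
      refine le_trans ihdrop ?_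
      have := Nat.pow_le_pow_right (show 1 ≤ 2 by norm_num) hdroplog
      omega
    have hm2 : (X ^ (2^t) + C (l.getD (2^t - 1) 0) : Polynomial (ZMod p)).Monic :=
      monic_X_pow_add_C _ (by positivity)
    have hmul : (BRW (l.take (2^t - 1)) *
        (X ^ (2^t) + C (l.getD (2^t - 1) 0)) : Polynomial (ZMod p)).Monic :=
      hAmon.mul hm2
    have hdegmul : (BRW (l.take (2^t - 1)) *
        (X ^ (2^t) + C (l.getD (2^t - 1) 0)) : Polynomial (ZMod p)).natDegree
        = 2 ^ (t+1) - 1 := by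
      rw [hAmon.natDegree_mul hm2, hAdeg, natDegree_X_pow_add_C]
      have : 2 ^ t + 2 ^ t = 2 ^ (t+1) := by rw [pow_succ]; ring
      omega
    have hlt : (BRW (l.drop (2 ^ t))).degree < (BRW (l.take (2^t - 1)) *
        (X ^ (2^t) + C (l.getD (2^t - 1) 0)) : Polynomial (ZMod p)).degree := by
      refine lt_of_le_of_lt (degree_le_natDegree) ?_
      rw [degree_eq_natDegree hmul.ne_zero, hdegmul]
      have h2' : 2 ^ t - 1 < 2 ^ (t+1) - 1 := by
        have : 2 ^ t + 2 ^ t = 2 ^ (t+1) := by rw [pow_succ]; ring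
        omega
      exact_mod_cast lt_of_le_of_lt (Nat.cast_le.mpr ihdrop') (Nat.cast_lt.mpr h2')
    refine ⟨hmul.add_of_left hlt, ?_⟩
    rw [natDegree_eq_of_degree_eq (degree_add_eq_left_of_degree_lt hlt), hdegmul]

end Nontriv
section Inj
variable [hpp : Fact (p.Prime)]

/-- uniqueness of the split `A·X^D + R` with `deg R < D`. -/
lemma split_unique' {A A' R R' : Polynomial (ZMod p)} {D : ℕ}
    (hR : R.natDegree < D) (hR' : R'.natDegree < D)
    (h : A * X ^ D + R = A' * X ^ D + R') : A = A' ∧ R = R' := by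
  have key : (A - A') * X ^ D = R' - R := by linear_combination h
  by_cases hAA : A = A'
  · refine ⟨hAA, ?_⟩
    rw [hAA] at h
    exact add_left_cancel h
  · exfalso
    have hne : A - A' ≠ 0 := sub_ne_zero.mpr hAA
    have hX : (X : Polynomial (ZMod p)) ^ D ≠ 0 := pow_ne_zero _ X_ne_zero
    have hdeg : ((A - A') * X ^ D).natDegree = (A - A').natDegree + D := by
      rw [natDegree_mul hne hX, natDegree_X_pow]
    have h1 : D ≤ ((A - A') * X ^ D).natDegree := by omega
    have h2 : (R' - R).natDegree < D :=
      lt_of_le_of_lt (natDegree_sub_le _ _) (by omega)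
    rw [key] at h1
    omega

include hB0 hB1 hB2 hB3 hBrec in
lemma brw_inj : ∀ l l' : List (ZMod p), l.length = l'.length →
    BRW l = BRW l' → l = l' := by
  haveI : Fact (1 < p) := ⟨hpp.out.one_lt⟩
  suffices H : ∀ s (l l' : List (ZMod p)), l.length = s → l'.length = s →
      BRW l = BRW l' → l = l' by
    intro l l' hlen h
    exact H l.length l l' rfl hlen.symm h
  intro s
  induction s using Nat.strong_induction_on with
  | _ s ih =>
  intro l l' hl hl' heq
  match s, l, l', hl, hl' with
  | 0, [], [], _, _ => rfl
  | 1, [a], [a'], _, _ =>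
    rw [hB1, hB1] at heq
    rw [C_inj.mp heq]
  | 2, [a, b], [a', b'], _, _ =>
    rw [hB2, hB2] at heq
    have h1 := congrArg (fun q => Polynomial.coeff q 1) heq
    have h0 := congrArg (fun q => Polynomial.coeff q 0) heq
    simp [coeff_C_mul, coeff_X_one, coeff_C] at h1 h0
    rw [h1, h0]
  | 3, [a, b, c'], [a2, b2, c2], _, _ =>
    rw [hB3, hB3] at heq
    have key : ∀ u v w : ZMod p, (X + C u) * (X^2 + C v) + C w
        = X^3 + C u * X^2 + C v * X + C (u*v + w) := by
      intro u v w
      simp only [C_add, C_mul]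
      ring
    rw [key, key] at heq
    have h2 := congrArg (fun q => Polynomial.coeff q 2) heq
    have h1 := congrArg (fun q => Polynomial.coeff q 1) heq
    have h0 := congrArg (fun q => Polynomial.coeff q 0) heq
    simp [coeff_X_pow, coeff_C_mul, coeff_C, coeff_X_one] at h2 h1 h0
    rw [h2, h1] at h0 ⊢
    rw [add_left_cancel h0]
  | (s+4), l, l', hl, hl' =>
    have h4 : 4 ≤ l.length := by omega
    have h4' : 4 ≤ l'.length := by omega
    have hll : l.length = l'.length := by omega
    rw [hBrec l h4, hBrec l' h4'] at heq
    rw [← hll] at heq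
    set t := Nat.log 2 l.length with ht
    have ht2 : 2 ≤ t := Nat.le_log_of_pow_le (by norm_num) (by norm_num; omega)
    have hpow_le : 2 ^ t ≤ l.length := Nat.pow_log_le_self 2 (by omega)
    have hlt_pow : l.length < 2 ^ (t + 1) := Nat.lt_pow_succ_log_self (by norm_num) _
    have h4t : 4 ≤ 2 ^ t := by calc 4 = 2^2 := rfl
                                  _ ≤ 2^t := Nat.pow_le_pow_right (by norm_num) ht2
    have htake_len : (l.take (2 ^ t - 1)).length = 2 ^ t - 1 := by
      rw [List.length_take]; omega
    have htake_len' : (l'.take (2 ^ t - 1)).length = 2 ^ t - 1 := by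
      rw [List.length_take]; omega
    have hdrop_len : (l.drop (2 ^ t)).length = l.length - 2 ^ t := List.length_drop ..
    have hdrop_len' : (l'.drop (2 ^ t)).length = l.length - 2 ^ t := by
      rw [List.length_drop]; omega
    have hlog_take : Nat.log 2 (2 ^ t - 1) = t - 1 := by
      apply Nat.log_eq_of_pow_le_of_lt_pow
      · have : 2 ^ (t-1) * 2 ≤ 2 ^ t := by
          rw [← pow_succ]; exact Nat.pow_le_pow_right (by norm_num) (by omega)
        have h1 : 1 ≤ 2 ^ (t-1) := Nat.one_le_two_pow
        omega
      · have e : t - 1 + 1 = t := by omega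
        rw [e]; omega
    have e1 : t - 1 + 1 = t := by omega
    -- degrees of the A parts
    obtain ⟨hAmon, hAdeg⟩ := brw_monic BRW hB0 hB1 hB2 hB3 hBrec (l.take (2^t - 1))
      (by omega)
    rw [htake_len, hlog_take, e1] at hAdeg
    obtain ⟨hAmon', hAdeg'⟩ := brw_monic BRW hB0 hB1 hB2 hB3 hBrec (l'.take (2^t - 1))
      (by omega)
    rw [htake_len', hlog_take, e1] at hAdeg'
    -- degree bounds of B parts
    have hBdegb : ∀ r : List (ZMod p), r.length = l.length - 2 ^ t →
        (BRW r).natDegree ≤ 2 ^ t - 1 := by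
      intro r hr
      have ihdrop := brw_deg_le BRW hB0 hB1 hB2 hB3 hBrec r
      rw [hr] at ihdrop
      have hdroplog : Nat.log 2 (l.length - 2 ^ t) + 1 ≤ t := by
        rcases Nat.eq_zero_or_pos (l.length - 2 ^ t) with h0 | h0
        · rw [h0, Nat.log_zero_right]; omega
        · have hlt : l.length - 2 ^ t < 2 ^ t := by omega
          have := Nat.log_lt_of_lt_pow (by omega) hlt
          omega
      refine le_trans ihdrop ?_
      have := Nat.pow_le_pow_right (show 1 ≤ 2 by norm_num) hdroplog
      omega
    have hBdeg := hBdegb (l.drop (2^t)) hdrop_len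
    have hBdeg' := hBdegb (l'.drop (2^t)) hdrop_len'
    -- rearrange
    have heq2 : BRW (l.take (2^t - 1)) * X ^ (2^t) +
        (BRW (l.take (2^t - 1)) * C (l.getD (2^t - 1) 0) + BRW (l.drop (2^t))) =
        BRW (l'.take (2^t - 1)) * X ^ (2^t) +
        (BRW (l'.take (2^t - 1)) * C (l'.getD (2^t - 1) 0) + BRW (l'.drop (2^t))) := by
      linear_combination heq
    have hRdeg : (BRW (l.take (2^t - 1)) * C (l.getD (2^t - 1) 0)
        + BRW (l.drop (2^t))).natDegree < 2 ^ t := by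
      refine lt_of_le_of_lt (natDegree_add_le _ _) ?_
      rw [max_lt_iff]
      constructor
      · refine lt_of_le_of_lt natDegree_mul_le ?_
        rw [natDegree_C, hAdeg]; omega
      · omega
    have hRdeg' : (BRW (l'.take (2^t - 1)) * C (l'.getD (2^t - 1) 0)
        + BRW (l'.drop (2^t))).natDegree < 2 ^ t := by
      refine lt_of_le_of_lt (natDegree_add_le _ _) ?_
      rw [max_lt_iff]
      constructor
      · refine lt_of_le_of_lt natDegree_mul_le ?_
        rw [natDegree_C, hAdeg']; omega
      · omega
    obtain ⟨hA, hR⟩ := split_unique' hRdeg hRdeg' heq2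
    -- take parts equal
    have htake_eq : l.take (2^t - 1) = l'.take (2^t - 1) :=
      ih (2^t - 1) (by omega) _ _ htake_len htake_len' hA
    -- middle coefficients
    have hBcoeff : (BRW (l.drop (2^t))).coeff (2^t - 1)
        = (BRW (l'.drop (2^t))).coeff (2^t - 1) := by
      rcases le_or_gt 3 (l.length - 2^t) with h3B | h3B
      · obtain ⟨hm, hd⟩ := brw_monic BRW hB0 hB1 hB2 hB3 hBrec (l.drop (2^t))
          (by omega)
        obtain ⟨hm', hd'⟩ := brw_monic BRW hB0 hB1 hB2 hB3 hBrec (l'.drop (2^t))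
          (by omega)
        rw [hdrop_len] at hd
        rw [hdrop_len'] at hd'
        have hEq : (BRW (l'.drop (2^t))).natDegree = (BRW (l.drop (2^t))).natDegree :=
          hd'.trans hd.symm
        rcases eq_or_lt_of_le hBdeg with hE | hE
        · have c1 := hm.coeff_natDegree
          have c2 := hm'.coeff_natDegree
          rw [hE] at c1
          rw [hEq, hE] at c2
          rw [c1, c2]
        · rw [coeff_eq_zero_of_natDegree_lt hE,
            coeff_eq_zero_of_natDegree_lt (by rw [hEq]; exact hE)]
      · have hsm : (BRW (l.drop (2^t))).natDegree ≤ 1 :=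
          brw_deg_small BRW hB0 hB1 hB2 _ (by omega)
        have hsm' : (BRW (l'.drop (2^t))).natDegree ≤ 1 :=
          brw_deg_small BRW hB0 hB1 hB2 _ (by omega)
        rw [coeff_eq_zero_of_natDegree_lt (by omega), coeff_eq_zero_of_natDegree_lt (by omega)]
    -- extract M = M'
    have hMcoeff := congrArg (fun q => Polynomial.coeff q (2^t - 1)) hR
    simp only [coeff_add, coeff_mul_C] at hMcoeff
    rw [htake_eq] at hMcoeff
    have hlead : (BRW (l'.take (2^t - 1))).coeff (2^t - 1) = 1 := by
      have h := hAmon'.coeff_natDegree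
      rwa [hAdeg'] at h
    rw [hlead, hBcoeff, one_mul, one_mul] at hMcoeff
    have hM : l.getD (2^t - 1) 0 = l'.getD (2^t - 1) 0 := by
      have := add_right_cancel hMcoeff
      exact this
    -- B parts equal
    have hBeq : BRW (l.drop (2^t)) = BRW (l'.drop (2^t)) := by
      rw [htake_eq, hM] at hR
      exact add_left_cancel hR
    have hdrop_eq : l.drop (2^t) = l'.drop (2^t) :=
      ih (l.length - 2^t) (by omega) _ _ hdrop_len hdrop_len' hBeq
    -- reassemble
    have hre : ∀ u : List (ZMod p), 2^t - 1 < u.length →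
        u = u.take (2^t - 1) ++ u.getD (2^t - 1) 0 :: u.drop (2^t) := by
      intro u hu
      conv_lhs => rw [← List.take_append_drop (2^t - 1) u]
      congr 1
      rw [← List.getElem_cons_drop hu]
      simp only [show (2:ℕ)^t - 1 + 1 = 2^t from by omega, List.getD_eq_getElem u 0 hu]
    rw [hre l (by omega), hre l' (by omega), htake_eq, hM, hdrop_eq]

end Inj
end BRW

def dNN (n c : ℕ) (X : List Bool) : ℕ := ((X.length + n - 1) / n + c - 1) / c

def dVal (n c : ℕ) (X : List Bool) : ℕ :=
  if X.length = 0 then 1 else 2 ^ (Nat.log 2 (dNN n c X) + 1)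

def blockList (p n c : ℕ) (X : List Bool) (j : ℕ) : List (ZMod p) :=
  (List.range (dNN n c X)).map fun i =>
    ((blockVal ((X.drop (n * (c * i + j))).take n) : ℕ) : ZMod p)

noncomputable def qSum (p n c : ℕ) (BRW : List (ZMod p) → Polynomial (ZMod p))
    (X : List Bool) : Polynomial (ZMod p) :=
  ∑ j ∈ Finset.range c, Polynomial.X ^ ((c - 1 - j) * dVal n c X) * BRW (blockList p n c X j)

lemma decQ_eq (p n c : ℕ) (BRW : List (ZMod p) → Polynomial (ZMod p)) (X : List Bool) :
    decQ p n c BRW X = Polynomial.X * (Polynomial.X * qSum p n c BRW X +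
      Polynomial.C (X.length : ZMod p)) := rfl


section Main
variable {p : ℕ} [NeZero p] [hpp : Fact (p.Prime)]
variable (BRW : List (ZMod p) → Polynomial (ZMod p))
variable (hB0 : BRW [] = 0)
variable (hB1 : ∀ a : ZMod p, BRW [a] = Polynomial.C a)
variable (hB2 : ∀ a b : ZMod p, BRW [a, b] = Polynomial.C a * Polynomial.X + Polynomial.C b)
variable (hB3 : ∀ a b c' : ZMod p, BRW [a, b, c'] =
      (Polynomial.X + Polynomial.C a) * (Polynomial.X ^ 2 + Polynomial.C b) + Polynomial.C c')
variable (hBrec : ∀ l : List (ZMod p), 4 ≤ l.length →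
      BRW l = BRW (l.take (2 ^ Nat.log 2 l.length - 1)) *
        (Polynomial.X ^ (2 ^ Nat.log 2 l.length) +
          Polynomial.C (l.getD (2 ^ Nat.log 2 l.length - 1) 0)) +
        BRW (l.drop (2 ^ Nat.log 2 l.length)))

lemma blockList_length (n c : ℕ) (X : List Bool) (j : ℕ) :
    (blockList p n c X j).length = dNN n c X := by
  simp [blockList]

include hB0 hB1 hB2 hB3 hBrec in
lemma decQ_sub_ne_zero {m n c : ℕ} (hm : 2 ^ (m-1) < p) (hn : 0 < n) (hnm : n < m)
    (hc : 0 < c) (X X' : List Bool) (hXX' : X ≠ X')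
    (hLm : X.length < 2 ^ (m-1)) (hLm' : X'.length < 2 ^ (m-1)) :
    decQ p n c BRW X ≠ decQ p n c BRW X' := by
  haveI : Fact (1 < p) := ⟨hpp.out.one_lt⟩
  intro heq
  rw [decQ_eq, decQ_eq] at heq
  have hco1 : ∀ R : Polynomial (ZMod p), (Polynomial.X * R).coeff 1 = R.coeff 0 := by
    intro R; simpa using Polynomial.coeff_X_mul R 0
  by_cases hLL : X.length = X'.length
  case neg =>
    apply hLL
    have h1 := congrArg (fun q => q.coeff 1) heq
    simp only [hco1, Polynomial.coeff_add, Polynomial.mul_coeff_zero,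
      Polynomial.coeff_X_zero, zero_mul, Polynomial.coeff_C_zero, zero_add] at h1
    have h2 := congrArg ZMod.val h1
    rwa [ZMod.val_cast_of_lt (lt_trans hLm hm), ZMod.val_cast_of_lt (lt_trans hLm' hm)] at h2
  case pos =>
    -- same lengths
    have hL0 : X.length ≠ 0 := by
      intro h0
      apply hXX'
      rw [List.length_eq_zero_iff.mp h0, List.length_eq_zero_iff.mp (by omega : X'.length = 0)]
    have hnn : dNN n c X' = dNN n c X := by unfold dNN; rw [hLL]
    have hd : dVal n c X' = dVal n c X := by unfold dVal dNN; rw [hLL]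
    have hXne : (Polynomial.X : Polynomial (ZMod p)) ≠ 0 := Polynomial.X_ne_zero
    have hq : qSum p n c BRW X = qSum p n c BRW X' := by
      have step1 := mul_left_cancel₀ hXne heq
      rw [hLL] at step1
      exact mul_left_cancel₀ hXne (add_right_cancel step1)
    -- window separation
    set d := dVal n c X with hdd
    set nn := dNN n c X with hnnd
    have hd2 : d = 2 ^ (Nat.log 2 nn + 1) := by
      rw [hdd, dVal, if_neg hL0]
    have hdpos : 0 < d := by rw [hd2]; positivity
    have hzero : ∑ j ∈ Finset.range c, Polynomial.X ^ ((c - 1 - j) * d) *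
        (BRW (blockList p n c X j) - BRW (blockList p n c X' j)) = 0 := by
      have : ∑ j ∈ Finset.range c, Polynomial.X ^ ((c - 1 - j) * d) *
          (BRW (blockList p n c X j) - BRW (blockList p n c X' j))
          = qSum p n c BRW X - qSum p n c BRW X' := by
        rw [qSum, qSum, ← Finset.sum_sub_distrib]
        apply Finset.sum_congr rfl
        intro j _
        rw [mul_sub, ← hdd, hd]
      rw [this, hq, sub_self]
    have hdegs : ∀ j, (BRW (blockList p n c X j) - BRW (blockList p n c X' j)).natDegree < d := by
      intro j
      have b1 := brw_deg_le BRW hB0 hB1 hB2 hB3 hBrec (blockList p n c X j)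
      have b2 := brw_deg_le BRW hB0 hB1 hB2 hB3 hBrec (blockList p n c X' j)
      rw [blockList_length] at b1 b2
      rw [hnn] at b2
      rw [← hnnd] at b1
      refine lt_of_le_of_lt (Polynomial.natDegree_sub_le _ _) ?_
      rw [max_lt_iff, hd2]
      have : (1:ℕ) ≤ 2 ^ (Nat.log 2 nn + 1) := Nat.one_le_two_pow
      omega
    have hwin := window_zero c d hdpos _ hdegs hzero
    -- blocks equal
    have hbl : ∀ j < c, blockList p n c X j = blockList p n c X' j := by
      intro j hj
      have := sub_eq_zero.mp (hwin j hj)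
      exact brw_inj BRW hB0 hB1 hB2 hB3 hBrec _ _
        (by rw [blockList_length, blockList_length, hnn, hnnd]) this
    -- reconstruct equality of X and X'
    apply hXX'
    apply List.ext_getElem hLL
    intro i hi hi'
    have h3 := Nat.div_add_mod i n
    have hrn : i % n < n := Nat.mod_lt i hn
    have hℓn : X.length ≤ n * ((X.length + n - 1) / n) := by
      have h1 := Nat.div_add_mod (X.length + n - 1) n
      have h2 := Nat.mod_lt (X.length + n - 1) hn
      omega
    have hql : i / n < (X.length + n - 1) / n := by
      rcases Nat.lt_or_ge (i / n) ((X.length + n - 1) / n) with h | h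
      · exact h
      · exfalso
        have := Nat.mul_le_mul_left n h
        omega
    have h7 := Nat.div_add_mod (i / n) c
    have hjc : i / n % c < c := Nat.mod_lt (i / n) hc
    have hic : i / n / c < dNN n c X := by
      have h4 := Nat.div_add_mod ((X.length + n - 1) / n + c - 1) c
      have h5 := Nat.mod_lt ((X.length + n - 1) / n + c - 1) hc
      have h6 : (X.length + n - 1) / n ≤ c * dNN n c X := by unfold dNN; omega
      rcases Nat.lt_or_ge (i / n / c) (dNN n c X) with h | h
      · exact h
      · exfalso
        have := Nat.mul_le_mul_left c h
        omega
    have hic' : i / n / c < nn := by rw [hnnd]; exact hic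
    -- extract block equality
    have hbe := hbl (i / n % c) hjc
    have hlen1 : i / n / c < (blockList p n c X (i / n % c)).length := by
      rw [blockList_length]; exact hic
    have hlen2 : i / n / c < (blockList p n c X' (i / n % c)).length := by
      rw [blockList_length, hnn]; exact hic'
    have hmapeq : ((blockVal ((X.drop (n * (i/n))).take n) : ℕ) : ZMod p)
        = ((blockVal ((X'.drop (n * (i/n))).take n) : ℕ) : ZMod p) := by
      have h0 := List.getElem_of_eq hbe hlen1
      simpa [blockList, List.getElem_map, List.getElem_range, h7] using h0
    have hblklen : ((X.drop (n * (i/n))).take n).length = min n (X.length - n * (i/n)) := by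
      rw [List.length_take, List.length_drop]
    have hblklen' : ((X'.drop (n * (i/n))).take n).length = min n (X.length - n * (i/n)) := by
      rw [List.length_take, List.length_drop, hLL]
    have hnq : n * (i/n) ≤ i := by omega
    have hblkval : blockVal ((X.drop (n * (i/n))).take n)
        = blockVal ((X'.drop (n * (i/n))).take n) := by
      have v1 : blockVal ((X.drop (n * (i/n))).take n) < p := by
        refine lt_trans (lt_of_lt_of_le (blockVal_lt _) ?_) hm
        apply Nat.pow_le_pow_right (by norm_num)
        rw [hblklen]; omega
      have v2 : blockVal ((X'.drop (n * (i/n))).take n) < p := by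
        refine lt_trans (lt_of_lt_of_le (blockVal_lt _) ?_) hm
        apply Nat.pow_le_pow_right (by norm_num)
        rw [hblklen']; omega
      have h2 := congrArg ZMod.val hmapeq
      rwa [ZMod.val_cast_of_lt v1, ZMod.val_cast_of_lt v2] at h2
    have hblkeq : (X.drop (n * (i/n))).take n = (X'.drop (n * (i/n))).take n :=
      blockVal_inj _ _ (by rw [hblklen, hblklen']) hblkval
    -- read off the bit
    have hri : i % n < ((X.drop (n * (i/n))).take n).length := by
      rw [hblklen]; omega
    have hri' : i % n < ((X'.drop (n * (i/n))).take n).length := by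
      rw [hblklen']; omega
    have hx : X[i] = ((X.drop (n * (i/n))).take n)[i % n]'hri := by
      rw [List.getElem_take, List.getElem_drop]
      congr 1
      omega
    have hx' : X'[i] = ((X'.drop (n * (i/n))).take n)[i % n]'hri' := by
      rw [List.getElem_take, List.getElem_drop]
      congr 1
      omega
    rw [hx, hx']
    exact List.getElem_of_eq hblkeq hri

lemma decQ_coeff_zero (p n c : ℕ) (BRW : List (ZMod p) → Polynomial (ZMod p)) (X : List Bool) :
    (decQ p n c BRW X).coeff 0 = 0 := by
  rw [decQ_eq, Polynomial.mul_coeff_zero, Polynomial.coeff_X_zero, zero_mul]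

include hB0 hB1 hB2 hB3 hBrec in
lemma decQ_natDegree_le {n c : ℕ} (hn : 0 < n) (hc : 0 < c) (X : List Bool) :
    (decQ p n c BRW X).natDegree ≤ 2 * ((X.length + n - 1) / n) + 2 * c - 1 := by
  by_cases hL0 : X.length = 0
  · have hnn0 : dNN n c X = 0 := by
      unfold dNN
      rw [hL0]
      have h1 : (0 + n - 1) / n = 0 := Nat.div_eq_of_lt (by omega)
      rw [h1]
      exact Nat.div_eq_of_lt (by omega)
    have hqs : qSum p n c BRW X = 0 := by
      rw [qSum]
      apply Finset.sum_eq_zero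
      intro j _
      rw [blockList, hnn0]
      simp [hB0]
    have : decQ p n c BRW X = 0 := by
      rw [decQ_eq, hqs, hL0]
      simp
    rw [this]
    simp
  · rw [decQ_eq]
    have hl1 : 1 ≤ (X.length + n - 1) / n := by
      rcases Nat.eq_zero_or_pos ((X.length + n - 1) / n) with h | h
      · exfalso
        have h2 := Nat.div_add_mod (X.length + n - 1) n
        rw [h, Nat.mul_zero] at h2
        have := Nat.mod_lt (X.length + n - 1) hn
        omega
      · exact h
    have hq : (qSum p n c BRW X).natDegree ≤ 2 * ((X.length + n - 1) / n) + 2 * c - 3 := by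
      set ℓ := (X.length + n - 1) / n with hℓ
      have hnn1 : 1 ≤ dNN n c X := by
        unfold dNN
        rw [← hℓ]
        rcases Nat.eq_zero_or_pos ((ℓ + c - 1) / c) with h | h
        · exfalso
          have h2 := Nat.div_add_mod (ℓ + c - 1) c
          rw [h, Nat.mul_zero] at h2
          have := Nat.mod_lt (ℓ + c - 1) hc
          omega
        · exact h
      have hcnn : c * dNN n c X ≤ ℓ + c - 1 := by
        unfold dNN
        rw [← hℓ]
        have := Nat.div_add_mod (ℓ + c - 1) c
        omega
      have hdle : dVal n c X ≤ 2 * dNN n c X := by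
        rw [dVal, if_neg hL0, pow_succ]
        have := Nat.pow_log_le_self 2 (by omega : dNN n c X ≠ 0)
        omega
      apply Polynomial.natDegree_sum_le_of_forall_le
      intro j hj
      rw [Finset.mem_range] at hj
      refine le_trans Polynomial.natDegree_mul_le ?_
      have h1 : ((Polynomial.X : Polynomial (ZMod p)) ^ ((c - 1 - j) * dVal n c X)).natDegree
          ≤ (c - 1 - j) * dVal n c X := natDegree_X_pow_le' _
      have h2 := brw_deg_le BRW hB0 hB1 hB2 hB3 hBrec (blockList p n c X j)
      rw [blockList_length] at h2
      have h3 : 2 ^ (Nat.log 2 (dNN n c X) + 1) = dVal n c X := by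
        rw [dVal, if_neg hL0]
      rw [h3] at h2
      have h4 : (c - 1 - j) * dVal n c X ≤ (c - 1) * dVal n c X :=
        Nat.mul_le_mul_right _ (by omega)
      have h5 : c * dVal n c X ≤ 2 * (ℓ + c - 1) := by
        calc c * dVal n c X ≤ c * (2 * dNN n c X) := Nat.mul_le_mul_left c hdle
        _ = 2 * (c * dNN n c X) := by ring
        _ ≤ 2 * (ℓ + c - 1) := Nat.mul_le_mul_left 2 hcnn
      have h6 : (c - 1) * dVal n c X + dVal n c X = c * dVal n c X := by
        have hcc : c - 1 + 1 = c := by omega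
        calc (c - 1) * dVal n c X + dVal n c X = (c - 1 + 1) * dVal n c X := by ring
        _ = c * dVal n c X := by rw [hcc]
      have h7 : 1 ≤ dVal n c X := by
        rw [dVal, if_neg hL0]
        exact Nat.one_le_two_pow
      omega
    have houter : (Polynomial.X * qSum p n c BRW X +
        Polynomial.C ((X.length : ZMod p))).natDegree ≤
        2 * ((X.length + n - 1) / n) + 2 * c - 2 := by
      refine le_trans (Polynomial.natDegree_add_le _ _) ?_
      rw [Polynomial.natDegree_C]
      refine max_le (le_trans Polynomial.natDegree_mul_le ?_) (by omega)
      have := Polynomial.natDegree_X_le (R := ZMod p)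
      omega
    refine le_trans Polynomial.natDegree_mul_le ?_
    have := Polynomial.natDegree_X_le (R := ZMod p)
    omega

end Main

/-- AXU bound for `c-decBRWHash`: for distinct messages `X, X'` of lengths `L ≥ L' ≥ 0`
(both `< 2^(m−1)`), `α ∈ Z_{2^μ}`, `ℓ = ⌈L/n⌉`, and `τ` uniform over `k`-bit strings,
the differential probability is `≤ (2ℓ+1)·2^(m−k−μ+1)` when `c = 1`, and
`< (2ℓ+2c+1)·2^(m−k−μ+1)` when `c > 1`. -/
theorem decBRWHash_axu_bound (m δ μ k p n c : ℕ) [NeZero p] (hp : p.Prime)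
    (hpm : p = 2 ^ m - δ) (hμ0 : 0 < μ) (hμm : μ < m) (hδ : δ < 2 ^ μ - 1)
    (hk : 0 < k) (hkp : 2 ^ k ≤ p) (hn : 0 < n) (hnm : n < m) (hc : 0 < c)
    (BRW : List (ZMod p) → Polynomial (ZMod p))
    (hB0 : BRW [] = 0)
    (hB1 : ∀ a : ZMod p, BRW [a] = Polynomial.C a)
    (hB2 : ∀ a b : ZMod p, BRW [a, b] = Polynomial.C a * Polynomial.X + Polynomial.C b)
    (hB3 : ∀ a b c' : ZMod p, BRW [a, b, c'] =
      (Polynomial.X + Polynomial.C a) * (Polynomial.X ^ 2 + Polynomial.C b) + Polynomial.C c')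
    (hBrec : ∀ l : List (ZMod p), 4 ≤ l.length →
      BRW l = BRW (l.take (2 ^ Nat.log 2 l.length - 1)) *
        (Polynomial.X ^ (2 ^ Nat.log 2 l.length) +
          Polynomial.C (l.getD (2 ^ Nat.log 2 l.length - 1) 0)) +
        BRW (l.drop (2 ^ Nat.log 2 l.length)))
    (X X' : List Bool) (hXX' : X ≠ X')
    (hL : X.length < 2 ^ (m - 1)) (hL' : X'.length < 2 ^ (m - 1))
    (hLL : X'.length ≤ X.length) (α : ZMod (2 ^ μ)) :
    (c = 1 →
      (((Finset.range (2 ^ k)).filter fun t : ℕ =>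
          decBRWHash p μ n c BRW (t : ZMod p) X - decBRWHash p μ n c BRW (t : ZMod p) X'
            = α).card : ℝ) / (2 ^ k : ℝ)
        ≤ (2 * ((X.length + n - 1) / n) + 1 : ℕ) * (2 : ℝ) ^ ((m : ℤ) - k - μ + 1)) ∧
    (1 < c →
      (((Finset.range (2 ^ k)).filter fun t : ℕ =>
          decBRWHash p μ n c BRW (t : ZMod p) X - decBRWHash p μ n c BRW (t : ZMod p) X'
            = α).card : ℝ) / (2 ^ k : ℝ)
        < (2 * ((X.length + n - 1) / n) + 2 * c + 1 : ℕ) * (2 : ℝ) ^ ((m : ℤ) - k - μ + 1)) := by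
  haveI hfp : Fact p.Prime := ⟨hp⟩
  haveI : Fact (1 < p) := ⟨hp.one_lt⟩
  have hm2 : 2 ≤ m := by omega
  have hμpow : 2 ^ μ ≤ 2 ^ (m - 1) := Nat.pow_le_pow_right (by norm_num) (by omega)
  have h2m : 2 ^ m = 2 * 2 ^ (m - 1) := by
    rw [← pow_succ']
    congr 1
    omega
  have h1μ : 1 ≤ 2 ^ μ := Nat.one_le_two_pow
  have hmp : 2 ^ (m - 1) < p := by
    rw [hpm]
    omega
  set ℓ := (X.length + n - 1) / n with hℓ
  set D := decQ p n c BRW X - decQ p n c BRW X' with hDdef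
  have hDne : D ≠ 0 := sub_ne_zero.mpr
    (decQ_sub_ne_zero BRW hB0 hB1 hB2 hB3 hBrec hmp hn hnm hc X X' hXX' hL hL')
  have hD0 : D.coeff 0 = 0 := by
    rw [hDdef, Polynomial.coeff_sub, decQ_coeff_zero, decQ_coeff_zero, sub_zero]
  have hDdeg : D.natDegree ≤ 2 * ℓ + 2 * c - 1 := by
    have hℓ2 : (X'.length + n - 1) / n ≤ ℓ := by
      rw [hℓ]
      exact Nat.div_le_div_right (by omega)
    refine le_trans (Polynomial.natDegree_sub_le _ _) (max_le ?_ ?_)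
    · exact decQ_natDegree_le BRW hB0 hB1 hB2 hB3 hBrec hn hc X
    · refine le_trans (decQ_natDegree_le BRW hB0 hB1 hB2 hB3 hBrec hn hc X') ?_
      omega
  -- target sets
  set T := (Finset.Ico (-(p:ℤ) + 1) (p:ℤ)).filter
      (fun w : ℤ => ((w : ℤ) : ZMod (2^μ)) = α) with hT
  set S := T.image (fun w : ℤ => ((w : ℤ) : ZMod p)) with hS
  set P := ∏ β ∈ S, (D - Polynomial.C β) with hP
  have hfac : ∀ β : ZMod p, D - Polynomial.C β ≠ 0 := by
    intro β
    by_cases hβ : β = 0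
    · rw [hβ]
      simpa using hDne
    · intro h
      apply hβ
      have h2 : D.coeff 0 - β = 0 := by
        have := congrArg (fun q => Polynomial.coeff q 0) h
        simpa using this
      rw [hD0, zero_sub, neg_eq_zero] at h2
      exact h2
  have hPne : P ≠ 0 := Finset.prod_ne_zero_iff.mpr (fun β _ => hfac β)
  have hPdeg : P.natDegree ≤ S.card * (2 * ℓ + 2 * c - 1) := by
    rw [hP, Polynomial.natDegree_prod _ _ (fun β _ => hfac β)]
    calc ∑ β ∈ S, (D - Polynomial.C β).natDegree
        ≤ S.card • (2 * ℓ + 2 * c - 1) := Finset.sum_le_card_nsmul _ _ _ (fun β _ => by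
          refine le_trans (Polynomial.natDegree_sub_le _ _) ?_
          rw [Polynomial.natDegree_C]
          exact max_le hDdeg (by omega))
      _ = S.card * (2 * ℓ + 2 * c - 1) := by rw [smul_eq_mul]
  set F := (Finset.range (2 ^ k)).filter (fun t : ℕ =>
      decBRWHash p μ n c BRW (t : ZMod p) X - decBRWHash p μ n c BRW (t : ZMod p) X'
        = α) with hF
  have hroot : ∀ t ∈ F, ((t : ZMod p) ∈ P.roots.toFinset) := by
    intro t ht
    rw [hF, Finset.mem_filter] at ht
    obtain ⟨htr, hev⟩ := ht
    have hvp : ((decQ p n c BRW X).eval (t : ZMod p)).val < p :=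
      ZMod.val_lt _
    have hvp' : ((decQ p n c BRW X').eval (t : ZMod p)).val < p :=
      ZMod.val_lt _
    set w : ℤ := (((decQ p n c BRW X).eval (t : ZMod p)).val : ℤ)
      - (((decQ p n c BRW X').eval (t : ZMod p)).val : ℤ) with hwdef
    have hw1 : ((w : ℤ) : ZMod (2^μ)) = α := by
      rw [hwdef]
      push_cast
      exact hev
    have hwmem : w ∈ T := by
      rw [hT, Finset.mem_filter, Finset.mem_Ico]
      refine ⟨⟨by rw [hwdef]; omega, by rw [hwdef]; omega⟩, hw1⟩
    have hβS : D.eval (t : ZMod p) ∈ S := by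
      rw [hS, Finset.mem_image]
      refine ⟨w, hwmem, ?_⟩
      rw [hwdef]
      push_cast
      rw [ZMod.natCast_val, ZMod.natCast_val, ZMod.cast_id, ZMod.cast_id,
        hDdef, Polynomial.eval_sub]
    rw [Multiset.mem_toFinset, Polynomial.mem_roots hPne]
    rw [hP, Polynomial.IsRoot.def, Polynomial.eval_prod]
    apply Finset.prod_eq_zero hβS
    rw [Polynomial.eval_sub, Polynomial.eval_C, sub_self]
  have hinj : Set.InjOn (fun t : ℕ => (t : ZMod p)) F := by
    intro a ha b hb hab
    have haa : a < 2 ^ k := Finset.mem_range.mp (Finset.mem_filter.mp ha).1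
    have hbb : b < 2 ^ k := Finset.mem_range.mp (Finset.mem_filter.mp hb).1
    have h2 := congrArg ZMod.val hab
    simpa [ZMod.val_cast_of_lt (lt_of_lt_of_le haa hkp),
      ZMod.val_cast_of_lt (lt_of_lt_of_le hbb hkp)] using h2
  have hcount : F.card ≤ S.card * (2 * ℓ + 2 * c - 1) := by
    calc F.card = (F.image (fun t : ℕ => (t : ZMod p))).card :=
        (Finset.card_image_of_injOn hinj).symm
    _ ≤ P.roots.toFinset.card := Finset.card_le_card (fun x hx => by
        obtain ⟨t, ht, rfl⟩ := Finset.mem_image.mp hx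
        exact hroot t ht)
    _ ≤ Multiset.card P.roots := Multiset.toFinset_card_le _
    _ ≤ P.natDegree := Polynomial.card_roots' P
    _ ≤ _ := hPdeg
  -- bound on S.card via T.card
  have hMpos : (0:ℤ) < ((2:ℤ)^μ) := by positivity
  have hTcard : T.card ≤ 2 ^ (m + 1 - μ) := by
    have hg : Set.InjOn (fun w : ℤ => ((w + p - 1) / ((2:ℤ)^μ)).toNat) ↑T := by
      intro w1 h1 w2 h2 he
      simp only [hT, Finset.coe_filter, Set.mem_setOf_eq, Finset.mem_Ico] at h1 h2
      have hdvd : ((2^μ : ℕ) : ℤ) ∣ (w1 - w2) := by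
        rw [← ZMod.intCast_zmod_eq_zero_iff_dvd]
        push_cast
        rw [sub_eq_zero]
        have e1 : ((w1 : ℤ) : ZMod (2^μ)) = α := h1.2
        have e2 : ((w2 : ℤ) : ZMod (2^μ)) = α := h2.2
        rw [e1, e2]
      obtain ⟨q, hq⟩ := hdvd
      push_cast at hq
      have e1 : w1 + (p:ℤ) - 1 = (w2 + (p:ℤ) - 1) + ((2:ℤ)^μ) * q := by
        rw [← hq]; ring
      simp only at he
      rw [e1, Int.add_mul_ediv_left _ q (ne_of_gt hMpos)] at he
      have hnn : 0 ≤ (w2 + (p:ℤ) - 1) / ((2:ℤ)^μ) :=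
        Int.ediv_nonneg (by omega) (le_of_lt hMpos)
      have hnn1 : 0 ≤ (w2 + (p:ℤ) - 1) / ((2:ℤ)^μ) + q := by
        rw [← Int.add_mul_ediv_left _ q (ne_of_gt hMpos), ← e1]
        exact Int.ediv_nonneg (by omega) (le_of_lt hMpos)
      have hq0 : q = 0 := by omega
      rw [hq0, mul_zero] at hq
      omega
    have himg : T.image (fun w : ℤ => ((w + p - 1) / ((2:ℤ)^μ)).toNat)
        ⊆ Finset.range (2 ^ (m + 1 - μ)) := by
      intro x hx
      obtain ⟨w, hw, rfl⟩ := Finset.mem_image.mp hx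
      rw [hT, Finset.mem_filter, Finset.mem_Ico] at hw
      rw [Finset.mem_range]
      have hlt : (w + (p:ℤ) - 1) / ((2:ℤ)^μ) < ((2 ^ (m + 1 - μ) : ℕ) : ℤ) := by
        rw [Int.ediv_lt_iff_lt_mul hMpos]
        have hpow2 : ((2 ^ (m + 1 - μ) : ℕ) : ℤ) * ((2:ℤ)^μ) = ((2:ℤ))^(m+1) := by
          push_cast
          rw [← pow_add]
          congr 1
          omega
        rw [hpow2]
        have hp2m : (p:ℤ) ≤ (2:ℤ)^m := by
          have h9 : p ≤ 2 ^ m := by omega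
          exact_mod_cast h9
        have h10 : ((2:ℤ))^(m+1) = 2 * (2:ℤ)^m := by ring
        omega
      have hnn2 : 0 ≤ (w + (p:ℤ) - 1) / ((2:ℤ)^μ) :=
        Int.ediv_nonneg (by omega) (le_of_lt hMpos)
      omega
    calc T.card = (T.image (fun w : ℤ => ((w + p - 1) / ((2:ℤ)^μ)).toNat)).card :=
        (Finset.card_image_of_injOn hg).symm
    _ ≤ (Finset.range (2 ^ (m + 1 - μ))).card := Finset.card_le_card himg
    _ = 2 ^ (m + 1 - μ) := Finset.card_range _
  have hScard : S.card ≤ 2 ^ (m + 1 - μ) := le_trans Finset.card_image_le hTcard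
  have hfinal : F.card ≤ (2 * ℓ + 2 * c - 1) * 2 ^ (m + 1 - μ) := by
    calc F.card ≤ S.card * (2 * ℓ + 2 * c - 1) := hcount
    _ ≤ 2 ^ (m + 1 - μ) * (2 * ℓ + 2 * c - 1) := Nat.mul_le_mul_right _ hScard
    _ = (2 * ℓ + 2 * c - 1) * 2 ^ (m + 1 - μ) := Nat.mul_comm _ _
  -- real arithmetic
  have hpow : (2:ℝ) ^ ((m : ℤ) - k - μ + 1) = ((2 ^ (m + 1 - μ) : ℕ) : ℝ) / ((2:ℝ) ^ k) := by
    have h1 : (m : ℤ) - k - μ + 1 = ((m + 1 - μ : ℕ) : ℤ) - (k : ℤ) := by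
      have : ((m + 1 - μ : ℕ) : ℤ) = (m : ℤ) + 1 - μ := by omega
      omega
    rw [h1, zpow_sub₀ (by norm_num : (2:ℝ) ≠ 0), zpow_natCast, zpow_natCast]
    push_cast
    ring
  have h2kpos : (0:ℝ) < (2:ℝ) ^ k := by positivity
  constructor
  · intro hc1
    subst hc1
    have hle : (F.card : ℝ) ≤ (((2 * ℓ + 1) * 2 ^ (m + 1 - μ) : ℕ) : ℝ) := by
      exact_mod_cast (by simpa using hfinal : F.card ≤ (2 * ℓ + 1) * 2 ^ (m + 1 - μ))
    calc (F.card : ℝ) / (2:ℝ) ^ k ≤ (((2 * ℓ + 1) * 2 ^ (m + 1 - μ) : ℕ) : ℝ) / (2:ℝ) ^ k :=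
        (div_le_div_iff_of_pos_right h2kpos).mpr hle
    _ = ((2 * ℓ + 1 : ℕ) : ℝ) * (2:ℝ) ^ ((m : ℤ) - k - μ + 1) := by
        rw [hpow]
        push_cast
        ring
  · intro hc2
    have hlt : (F.card : ℝ) < (((2 * ℓ + 2 * c + 1) * 2 ^ (m + 1 - μ) : ℕ) : ℝ) := by
      have hN1 : 1 ≤ 2 ^ (m + 1 - μ) := Nat.one_le_two_pow
      have hcard2 : F.card < (2 * ℓ + 2 * c + 1) * 2 ^ (m + 1 - μ) :=
        lt_of_le_of_lt hfinal
          ((Nat.mul_lt_mul_right (by positivity)).mpr (by omega))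
      exact_mod_cast hcard2
    calc (F.card : ℝ) / (2:ℝ) ^ k
        < (((2 * ℓ + 2 * c + 1) * 2 ^ (m + 1 - μ) : ℕ) : ℝ) / (2:ℝ) ^ k :=
        (div_lt_div_iff_of_pos_right h2kpos).mpr hlt
    _ = ((2 * ℓ + 2 * c + 1 : ℕ) : ℝ) * (2:ℝ) ^ ((m : ℤ) - k - μ + 1) := by
        rw [hpow]
        push_cast
        ring
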